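/- Let P be a stochastic matrix on a finite state space X, μ a probability distribution on X, γ ∈ [0,1), and define the discounted transition matrix P^(γ) := γP + (1−γ) e μᵀ. Then the discounted future state distribution d^(γ), defined by (d^(γ))ᵀ = (1−γ) μᵀ Σ_{t=0}^∞ (γP)^t = (1−γ) μᵀ (I − γP)^{-1}, is a stationary distribution of P^(γ), i.e. (d^(γ))ᵀ P^(γ) = (d^(γ))ᵀ and d^(γ) is a probability distribution. -/

import Mathlib

open Matrix

section AuxStmt3
attribute [local instance] Matrix.linftyOpNormedRing Matrix.linftyOpNormedAlgebra

variable {X : Type*} [Fintype X] [DecidableEq X]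

private lemma stmt3_pow_nonneg (P : Matrix X X ℝ) (hP0 : ∀ x y, 0 ≤ P x y)
    (γ : ℝ) (hγ0 : 0 ≤ γ) : ∀ t : ℕ, ∀ x y, 0 ≤ ((γ • P) ^ t) x y := by
  intro t
  induction t with
  | zero => intro x y; by_cases h : x = y <;> simp [Matrix.one_apply, h]
  | succ n ih =>
    intro x y
    rw [pow_succ, Matrix.mul_apply]
    exact Finset.sum_nonneg fun z _ =>
      mul_nonneg (ih x z) (smul_nonneg hγ0 (hP0 z y))

private lemma stmt3_aux (P : Matrix X X ℝ)
    (hP0 : ∀ x y, 0 ≤ P x y) (hP1 : ∀ x, ∑ y, P x y = 1)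
    (μ : X → ℝ) (hμ0 : ∀ x, 0 ≤ μ x) (hμ1 : ∑ x, μ x = 1)
    (γ : ℝ) (hγ : γ ∈ Set.Ico (0 : ℝ) 1) :
    let Pγ : Matrix X X ℝ := γ • P + (1 - γ) • Matrix.of fun _ y => μ y
    let dγ : X → ℝ := (1 - γ) • Matrix.vecMul μ ((1 : Matrix X X ℝ) - γ • P)⁻¹
    ((1 - γ) • Matrix.vecMul μ (∑' t : ℕ, (γ • P) ^ t) = dγ)
      ∧ Matrix.vecMul dγ Pγ = dγ ∧ (∀ x, 0 ≤ dγ x) ∧ ∑ x, dγ x = 1 := by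
  obtain ⟨hγ0, hγ1⟩ := hγ
  intro Pγ dγ
  -- norm bound
  have hnorm : ‖γ • P‖ < 1 := by
    have h : ‖γ • P‖ ≤ γ := by
      rw [Matrix.linfty_opNorm_def]
      have hle : (Finset.univ.sup fun i : X => ∑ j, ‖(γ • P) i j‖₊) ≤ γ.toNNReal := by
        apply Finset.sup_le
        intro i _
        rw [← NNReal.coe_le_coe]
        push_cast
        have : ∀ j, ‖(γ • P) i j‖ = γ * P i j := by
          intro j
          simp [Matrix.smul_apply, Real.norm_eq_abs, abs_mul, abs_of_nonneg hγ0,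
            abs_of_nonneg (hP0 i j)]
        rw [Finset.sum_congr rfl fun j _ => this j, ← Finset.mul_sum, hP1,
          Real.coe_toNNReal _ hγ0, mul_one]
      calc ((Finset.univ.sup fun i : X => ∑ j, ‖(γ • P) i j‖₊ : NNReal) : ℝ)
          ≤ (γ.toNNReal : ℝ) := NNReal.coe_le_coe.mpr hle
        _ = γ := Real.coe_toNNReal _ hγ0
    linarith
  have hsummable : Summable fun t : ℕ => (γ • P) ^ t :=
    summable_geometric_of_norm_lt_one hnorm
  -- the inverse equals the geometric series
  have hunit : IsUnit ((1 : Matrix X X ℝ) - γ • P) := (Units.oneSub _ hnorm).isUnit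
  have hdet : IsUnit ((1 : Matrix X X ℝ) - γ • P).det :=
    (Matrix.isUnit_iff_isUnit_det _).mp hunit
  have hinv : ((1 : Matrix X X ℝ) - γ • P)⁻¹ = ∑' t : ℕ, (γ • P) ^ t := by
    rw [Matrix.nonsing_inv_eq_ringInverse, ← geom_series_eq_inverse _ hnorm]
    rfl
  -- basic identity : ν (1 - γP) = μ where ν = μ (1-γP)⁻¹
  set ν : X → ℝ := Matrix.vecMul μ ((1 : Matrix X X ℝ) - γ • P)⁻¹ with hν_def
  have hν : Matrix.vecMul ν ((1 : Matrix X X ℝ) - γ • P) = μ := by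
    rw [hν_def, Matrix.vecMul_vecMul, Matrix.nonsing_inv_mul _ hdet, Matrix.vecMul_one]
  -- coordinatewise version : ν x - γ * (ν ⬝ P) x = μ x
  have hνx : ∀ x, ν x - γ * (Matrix.vecMul ν P) x = μ x := by
    have hexp : Matrix.vecMul ν ((1 : Matrix X X ℝ) - γ • P)
        = ν - γ • Matrix.vecMul ν P := by
      rw [Matrix.vecMul_sub, Matrix.vecMul_one]
      congr 1
      funext x
      show ∑ z, ν z * (γ • P) z x = (γ • Matrix.vecMul ν P) x
      simp only [Pi.smul_apply, smul_eq_mul, Matrix.smul_apply, Matrix.vecMul,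
        dotProduct, Finset.mul_sum]
      exact Finset.sum_congr rfl fun z _ => by ring
    intro x
    have := congrFun hν x
    rw [hexp] at this
    simpa [Pi.sub_apply, Pi.smul_apply, smul_eq_mul] using this
  -- sum of ν
  have hsumν : (1 - γ) * ∑ x, ν x = 1 := by
    have : ∑ x, (ν x - γ * (Matrix.vecMul ν P) x) = ∑ x, μ x :=
      Finset.sum_congr rfl fun x _ => hνx x
    rw [hμ1] at this
    rw [Finset.sum_sub_distrib] at this
    have hPsum : ∑ x, γ * (Matrix.vecMul ν P) x = γ * ∑ y, ν y := by
      rw [← Finset.mul_sum]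
      congr 1
      simp only [Matrix.vecMul, dotProduct]
      rw [Finset.sum_comm]
      refine Finset.sum_congr rfl fun z _ => ?_
      rw [← Finset.mul_sum, hP1, mul_one]
    rw [hPsum] at this
    ring_nf
    ring_nf at this
    linarith
  have hsumd : ∑ x, dγ x = 1 := by
    show ∑ x, ((1 - γ) • ν) x = 1
    simp only [Pi.smul_apply, smul_eq_mul]
    rw [← Finset.mul_sum]
    exact hsumν
  refine ⟨by rw [← hinv], ?_, ?_, hsumd⟩
  · -- stationarity
    funext y
    show (Matrix.vecMul ((1 - γ) • ν) Pγ) y = ((1 - γ) • ν) y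
    have hPγ : ∀ z y, Pγ z y = γ * P z y + (1 - γ) * μ y := fun z y => rfl
    simp only [Matrix.vecMul, dotProduct, Pi.smul_apply, smul_eq_mul]
    have hsplit : ∑ z, (1 - γ) * ν z * Pγ z y
        = (1 - γ) * γ * (∑ z, ν z * P z y) + ((1 - γ) * (1 - γ) * μ y) * ∑ z, ν z := by
      rw [Finset.mul_sum, Finset.mul_sum, ← Finset.sum_add_distrib]
      refine Finset.sum_congr rfl fun z _ => ?_
      rw [hPγ z y]; ring
    rw [hsplit]
    have hvp : (∑ z, ν z * P z y) = (Matrix.vecMul ν P) y := rfl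
    have h3 : (1 - γ) * (1 - γ) * μ y * ∑ z, ν z = (1 - γ) * μ y := by
      linear_combination (1 - γ) * μ y * hsumν
    rw [hvp, h3]
    linear_combination (γ - 1) * hνx y
  · -- nonnegativity
    intro x
    show 0 ≤ ((1 - γ) • ν) x
    have hA : ∀ z x, 0 ≤ ((1 : Matrix X X ℝ) - γ • P)⁻¹ z x := by
      intro z x
      rw [hinv]
      have htend := hsummable.hasSum.tendsto_sum_nat
      have hcont : Continuous fun A : Matrix X X ℝ => A z x := by
        exact (continuous_apply x).comp (continuous_apply z)
      have htend2 : Filter.Tendsto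
          (fun n => (∑ t ∈ Finset.range n, (γ • P) ^ t) z x)
          Filter.atTop (nhds ((∑' t : ℕ, (γ • P) ^ t) z x)) :=
        (hcont.tendsto _).comp htend
      refine ge_of_tendsto' htend2 fun n => ?_
      rw [Matrix.sum_apply]
      exact Finset.sum_nonneg fun t _ => stmt3_pow_nonneg P hP0 γ hγ0 t z x
    have hν0 : 0 ≤ ν x := by
      rw [hν_def]
      exact Finset.sum_nonneg fun z _ => mul_nonneg (hμ0 z) (hA z x)
    simp only [Pi.smul_apply, smul_eq_mul]
    exact mul_nonneg (by linarith) hν0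

end AuxStmt3

/-- The discounted future state distribution
`(d^(γ))ᵀ = (1−γ) μᵀ Σₜ (γP)^t = (1−γ) μᵀ (I − γP)⁻¹` is a stationary
probability distribution of the discounted transition matrix
`P^(γ) = γP + (1−γ) e μᵀ`. -/
theorem stmt_3 (X : Type*) [Fintype X] [DecidableEq X]
    (P : Matrix X X ℝ) (hP0 : ∀ x y, 0 ≤ P x y) (hP1 : ∀ x, ∑ y, P x y = 1)
    (μ : X → ℝ) (hμ0 : ∀ x, 0 ≤ μ x) (hμ1 : ∑ x, μ x = 1)
    (γ : ℝ) (hγ : γ ∈ Set.Ico (0 : ℝ) 1) :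
    let Pγ : Matrix X X ℝ := γ • P + (1 - γ) • Matrix.of fun _ y => μ y
    let dγ : X → ℝ := (1 - γ) • Matrix.vecMul μ ((1 : Matrix X X ℝ) - γ • P)⁻¹
    ((1 - γ) • Matrix.vecMul μ (∑' t : ℕ, (γ • P) ^ t) = dγ)
      ∧ Matrix.vecMul dγ Pγ = dγ ∧ (∀ x, 0 ≤ dγ x) ∧ ∑ x, dγ x = 1 := by
  exact stmt3_aux P hP0 hP1 μ hμ0 hμ1 γ hγ
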